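/- Let μ ∈ ℝ be non-integer with f = μ - ⌊μ⌋, c = ⌈μ⌉ - μ, and c ≠ f. As γ → 0⁺, the expected value of the Dalap distribution p(n|μ,γ) ∝ γ^{|n-μ|} on ℤ converges to r(μ), the integer nearest to μ; if c = f the expectation converges to μ. -/

import Mathlib

open Filter Topology

private lemma daux_tendsto_id0 : Tendsto (fun γ : ℝ => γ) (𝓝[>] (0:ℝ)) (𝓝 0) :=
  tendsto_id.mono_left nhdsWithin_le_nhds

private lemma daux_rpow_tendsto {d : ℝ} (hd : 0 < d) :
    Tendsto (fun γ : ℝ => γ ^ d) (𝓝[>] (0:ℝ)) (𝓝 0) := by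
  have h := (Real.continuousAt_rpow_const 0 d (Or.inr hd.le)).tendsto
  rw [Real.zero_rpow hd.ne'] at h
  exact h.mono_left nhdsWithin_le_nhds

private lemma daux_lim1 (K d : ℝ) (hd : 0 < d) :
    Tendsto (fun γ : ℝ => (K*(1-γ)-γ + γ^d*((K+1)*(1-γ)+γ))/((1-γ)*(1+γ^d)))
      (𝓝[>] (0:ℝ)) (𝓝 K) := by
  have hpair : Tendsto (fun γ : ℝ => (γ, γ ^ d)) (𝓝[>] (0:ℝ)) (𝓝 ((0:ℝ), (0:ℝ))) :=
    daux_tendsto_id0.prodMk_nhds (daux_rpow_tendsto hd)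
  have hG : ContinuousAt (fun p : ℝ × ℝ =>
      (K*(1-p.1)-p.1 + p.2*((K+1)*(1-p.1)+p.1))/((1-p.1)*(1+p.2))) ((0:ℝ), (0:ℝ)) := by
    apply ContinuousAt.div
    · fun_prop
    · fun_prop
    · norm_num
  have := hG.tendsto.comp hpair
  simpa [Function.comp_def] using this

private lemma daux_lim2 (K d : ℝ) (hd : 0 < d) :
    Tendsto (fun γ : ℝ => (γ^d*(K*(1-γ)-γ) + ((K+1)*(1-γ)+γ))/((1-γ)*(γ^d+1)))
      (𝓝[>] (0:ℝ)) (𝓝 (K+1)) := by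
  have hpair : Tendsto (fun γ : ℝ => (γ, γ ^ d)) (𝓝[>] (0:ℝ)) (𝓝 ((0:ℝ), (0:ℝ))) :=
    daux_tendsto_id0.prodMk_nhds (daux_rpow_tendsto hd)
  have hG : ContinuousAt (fun p : ℝ × ℝ =>
      (p.2*(K*(1-p.1)-p.1) + ((K+1)*(1-p.1)+p.1))/((1-p.1)*(p.2+1))) ((0:ℝ), (0:ℝ)) := by
    apply ContinuousAt.div
    · fun_prop
    · fun_prop
    · norm_num
  have := hG.tendsto.comp hpair
  simpa [Function.comp_def] using this


private lemma daux_sum (μ : ℝ) (k : ℤ) (f c γ : ℝ)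
    (hf : f = μ - k) (hc : c = (k:ℝ) + 1 - μ)
    (hk : (k:ℝ) < μ) (hk1 : μ < (k:ℝ) + 1)
    (h0 : 0 < γ) (h1 : γ < 1) :
    (∑' n : ℤ, ((1 - γ) / (γ ^ f + γ ^ c)) * γ ^ |(n : ℝ) - μ| * (n : ℝ))
      = (γ ^ f * ((k:ℝ) * (1 - γ) - γ) + γ ^ c * (((k:ℝ) + 1) * (1 - γ) + γ))
        / ((1 - γ) * (γ ^ f + γ ^ c)) := by
  have hne : (1:ℝ) - γ ≠ 0 := by linarith
  have geom : HasSum (fun j : ℕ => γ ^ j) (1 - γ)⁻¹ :=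
    hasSum_geometric_of_lt_one h0.le h1
  have jgeom : HasSum (fun j : ℕ => (j:ℝ) * γ ^ j) (γ / (1 - γ)^2) :=
    hasSum_coe_mul_geometric_of_norm_lt_one (by rwa [Real.norm_eq_abs, abs_of_pos h0])
  have pos : HasSum (fun j : ℕ => γ ^ (c + (j:ℕ)) * ((k:ℝ) + 1 + j))
      (γ ^ c * (((k:ℝ) + 1) * (1 - γ)⁻¹ + γ / (1 - γ)^2)) := by
    have h2 : (fun j : ℕ => γ ^ (c + (j:ℕ)) * ((k:ℝ) + 1 + j))
        = fun j : ℕ => γ ^ c * (((k:ℝ) + 1) * γ ^ j + (j:ℝ) * γ ^ j) := by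
      funext j
      rw [show c + (j:ℕ) = c + (j:ℝ) from rfl, Real.rpow_add h0, Real.rpow_natCast]
      ring
    rw [h2]
    exact ((geom.mul_left ((k:ℝ) + 1)).add jgeom).mul_left (γ ^ c)
  have neg : HasSum (fun j : ℕ => γ ^ (f + (j:ℕ)) * ((k:ℝ) - j))
      (γ ^ f * ((k:ℝ) * (1 - γ)⁻¹ - γ / (1 - γ)^2)) := by
    have h2 : (fun j : ℕ => γ ^ (f + (j:ℕ)) * ((k:ℝ) - j))
        = fun j : ℕ => γ ^ f * ((k:ℝ) * γ ^ j - (j:ℝ) * γ ^ j) := by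
      funext j
      rw [show f + (j:ℕ) = f + (j:ℝ) from rfl, Real.rpow_add h0, Real.rpow_natCast]
      ring
    rw [h2]
    exact ((geom.mul_left (k:ℝ)).sub jgeom).mul_left (γ ^ f)
  have hrec : HasSum (Int.rec (fun j : ℕ => γ ^ (c + (j:ℕ)) * ((k:ℝ) + 1 + j))
      (fun j : ℕ => γ ^ (f + (j:ℕ)) * ((k:ℝ) - j)) : ℤ → ℝ)
      (γ ^ c * (((k:ℝ) + 1) * (1 - γ)⁻¹ + γ / (1 - γ)^2)
        + γ ^ f * ((k:ℝ) * (1 - γ)⁻¹ - γ / (1 - γ)^2)) :=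
    pos.int_rec neg
  have hfun : ((fun n : ℤ => γ ^ |(n : ℝ) - μ| * (n : ℝ)) ∘ (Equiv.addRight ((k:ℤ)+1)))
      = (Int.rec (fun j : ℕ => γ ^ (c + (j:ℕ)) * ((k:ℝ) + 1 + j))
        (fun j : ℕ => γ ^ (f + (j:ℕ)) * ((k:ℝ) - j)) : ℤ → ℝ) := by
    funext m
    cases m with
    | ofNat j =>
        show γ ^ |((Int.ofNat j + (k + 1) : ℤ) : ℝ) - μ| * ((Int.ofNat j + (k + 1) : ℤ) : ℝ)
          = γ ^ (c + (j:ℕ)) * ((k:ℝ) + 1 + j)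
        have h1' : ((Int.ofNat j + (k + 1) : ℤ) : ℝ) = (k:ℝ) + 1 + j := by
          simp only [Int.ofNat_eq_coe]; push_cast; ring
        rw [h1']
        congr 1
        congr 1
        rw [abs_of_nonneg (by have : (0:ℝ) ≤ (j:ℕ) := Nat.cast_nonneg j; linarith)]
        linarith [hc]
    | negSucc j =>
        show γ ^ |((Int.negSucc j + (k + 1) : ℤ) : ℝ) - μ| * ((Int.negSucc j + (k + 1) : ℤ) : ℝ)
          = γ ^ (f + (j:ℕ)) * ((k:ℝ) - j)
        have h1' : ((Int.negSucc j + (k + 1) : ℤ) : ℝ) = (k:ℝ) - j := by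
          rw [Int.negSucc_eq]; push_cast; ring
        rw [h1']
        congr 1
        congr 1
        rw [abs_of_nonpos (by have : (0:ℝ) ≤ (j:ℕ) := Nat.cast_nonneg j; linarith)]
        linarith [hf]
  have hFsum : HasSum (fun n : ℤ => γ ^ |(n : ℝ) - μ| * (n : ℝ))
      (γ ^ c * (((k:ℝ) + 1) * (1 - γ)⁻¹ + γ / (1 - γ)^2)
        + γ ^ f * ((k:ℝ) * (1 - γ)⁻¹ - γ / (1 - γ)^2)) := by
    rw [← (Equiv.addRight ((k:ℤ)+1)).hasSum_iff]
    rw [hfun]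
    exact hrec
  have hC : HasSum (fun n : ℤ => ((1 - γ) / (γ ^ f + γ ^ c)) * (γ ^ |(n : ℝ) - μ| * (n : ℝ)))
      (((1 - γ) / (γ ^ f + γ ^ c)) *
        (γ ^ c * (((k:ℝ) + 1) * (1 - γ)⁻¹ + γ / (1 - γ)^2)
          + γ ^ f * ((k:ℝ) * (1 - γ)⁻¹ - γ / (1 - γ)^2))) :=
    hFsum.mul_left _
  have hts : (∑' n : ℤ, ((1 - γ) / (γ ^ f + γ ^ c)) * γ ^ |(n : ℝ) - μ| * (n : ℝ))
      = ((1 - γ) / (γ ^ f + γ ^ c)) *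
        (γ ^ c * (((k:ℝ) + 1) * (1 - γ)⁻¹ + γ / (1 - γ)^2)
          + γ ^ f * ((k:ℝ) * (1 - γ)⁻¹ - γ / (1 - γ)^2)) := by
    simp_rw [mul_assoc]
    exact hC.tsum_eq
  rw [hts]
  have hfpos : (0:ℝ) < γ ^ f := Real.rpow_pos_of_pos h0 f
  have hcpos : (0:ℝ) < γ ^ c := Real.rpow_pos_of_pos h0 c
  have hden : γ ^ f + γ ^ c ≠ 0 := by positivity
  field_simp
  ring


/-- As `γ → 0⁺`, the expected value of the Dalap distribution
`p(n) = ((1-γ)/(γ^f+γ^c)) γ^{|n-μ|}` on ℤ converges to the nearest integer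
`r(μ)` when `c ≠ f`, and to `μ` when `c = f`. Here `μ` is non-integer,
`f = μ-⌊μ⌋`, `c = ⌈μ⌉-μ` with `⌈μ⌉ = ⌊μ⌋+1`, and `r(μ) = ⌊μ⌋` if `f < c`,
`r(μ) = ⌈μ⌉` if `f > c`. -/
theorem dalap_expectation_limit (μ : ℝ) (hμ : ∀ m : ℤ, (m : ℝ) ≠ μ)
    (f c : ℝ) (hf : f = μ - ⌊μ⌋) (hc : c = (⌊μ⌋ : ℝ) + 1 - μ) :
    (c ≠ f → Tendsto
      (fun γ : ℝ => ∑' n : ℤ,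
        ((1 - γ) / (γ ^ f + γ ^ c)) * γ ^ |(n : ℝ) - μ| * (n : ℝ))
      (𝓝[>] 0) (𝓝 (if f < c then (⌊μ⌋ : ℝ) else (⌊μ⌋ : ℝ) + 1))) ∧
    (c = f → Tendsto
      (fun γ : ℝ => ∑' n : ℤ,
        ((1 - γ) / (γ ^ f + γ ^ c)) * γ ^ |(n : ℝ) - μ| * (n : ℝ))
      (𝓝[>] 0) (𝓝 μ)) := by
  set k : ℤ := ⌊μ⌋ with hkdef
  have hk : (k:ℝ) < μ := (Int.floor_le μ).lt_of_ne (hμ k)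
  have hk1 : μ < (k:ℝ) + 1 := Int.lt_floor_add_one μ
  have hfpos : 0 < f := by rw [hf]; linarith
  have hcpos : 0 < c := by rw [hc]; linarith
  have hmem : Set.Ioo (0:ℝ) 1 ∈ 𝓝[>] (0:ℝ) :=
    Ioo_mem_nhdsGT_of_mem ⟨le_refl 0, one_pos⟩
  constructor
  · intro hne
    by_cases hlt : f < c
    · rw [if_pos hlt]
      have hd : 0 < c - f := by linarith
      apply Tendsto.congr' _ (daux_lim1 (k:ℝ) (c - f) hd)
      filter_upwards [hmem] with γ hγ
      obtain ⟨h0, h1⟩ := hγ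
      rw [daux_sum μ k f c γ hf hc hk hk1 h0 h1]
      have hc' : γ ^ c = γ ^ f * γ ^ (c - f) := by
        rw [← Real.rpow_add h0]; ring_nf
      rw [hc']
      have hfne : γ ^ f ≠ 0 := (Real.rpow_pos_of_pos h0 f).ne'
      have hdne : (0:ℝ) < γ ^ (c - f) := Real.rpow_pos_of_pos h0 _
      have hne1 : (1:ℝ) - γ ≠ 0 := by linarith
      have hden1 : γ ^ f + γ ^ f * γ ^ (c - f) ≠ 0 := by positivity
      have hden2 : (1:ℝ) + γ ^ (c - f) ≠ 0 := by positivity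
      field_simp
    · rw [if_neg hlt]
      have hd : 0 < f - c := by
        rcases lt_or_eq_of_le (not_lt.mp hlt) with h | h
        · linarith
        · exact (hne h).elim
      apply Tendsto.congr' _ (daux_lim2 (k:ℝ) (f - c) hd)
      filter_upwards [hmem] with γ hγ
      obtain ⟨h0, h1⟩ := hγ
      rw [daux_sum μ k f c γ hf hc hk hk1 h0 h1]
      have hf' : γ ^ f = γ ^ c * γ ^ (f - c) := by
        rw [← Real.rpow_add h0]; ring_nf
      rw [hf']
      have hcne : γ ^ c ≠ 0 := (Real.rpow_pos_of_pos h0 c).ne'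
      have hdne : (0:ℝ) < γ ^ (f - c) := Real.rpow_pos_of_pos h0 _
      have hne1 : (1:ℝ) - γ ≠ 0 := by linarith
      have hden1 : γ ^ c * γ ^ (f - c) + γ ^ c ≠ 0 := by positivity
      have hden2 : γ ^ (f - c) + 1 ≠ 0 := by positivity
      field_simp
  · intro hcf
    have hμ2 : 2 * μ = 2 * (k:ℝ) + 1 := by
      have : (k:ℝ) + 1 - μ = μ - k := by rw [← hc, ← hf, hcf]
      linarith
    apply Tendsto.congr' _ (tendsto_const_nhds (x := μ) (f := 𝓝[>] (0:ℝ)))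
    filter_upwards [hmem] with γ hγ
    obtain ⟨h0, h1⟩ := hγ
    rw [daux_sum μ k f c γ hf hc hk hk1 h0 h1, hcf]
    have hfne : (0:ℝ) < γ ^ f := Real.rpow_pos_of_pos h0 f
    have hne1 : (1:ℝ) - γ ≠ 0 := by linarith
    have hden : (1 - γ) * (γ ^ f + γ ^ f) ≠ 0 := by positivity
    rw [eq_div_iff hden]
    linear_combination (γ ^ f * (1 - γ)) * hμ2
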